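/- Let μ be a boundedly finite Borel measure on E = [0,∞)² ∖ {(0,0)} that is homogeneous of degree −1 and has standardized marginals, and suppose μ([1,∞)×[1,∞)) = 1 (complete tail dependence). Then μ is concentrated on the main diagonal, i.e. μ({z ∈ E : z₁ ≠ z₂}) = 0, and for every norm ‖·‖ on ℝ² with ‖(1,0)‖ = 1 = ‖(0,1)‖ the spectral measure Φ of μ with respect to ‖·‖ is concentrated at π/4 with Φ({π/4}) = ‖(1,1)‖. -/

import Mathlib

open MeasureTheory Set Real Filter Topology
open scoped ENNReal Pointwise

noncomputable section

/-- The cone `E = [0,∞)² \ {(0,0)}` as a subset of `ℝ²`. -/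
def Econe : Set (ℝ × ℝ) := (Ici 0 ×ˢ Ici 0) \ {((0 : ℝ), (0 : ℝ))}

/-- The angular coordinate `θ(z) = arctan (z₁ / z₂)`, with `θ(z) = π/2` when `z₂ = 0`. -/
def ang (z : ℝ × ℝ) : ℝ := if z.2 = 0 then π / 2 else Real.arctan (z.1 / z.2)

lemma mem_Econe_iff {z : ℝ × ℝ} : z ∈ Econe ↔ (0 ≤ z.1 ∧ 0 ≤ z.2) ∧ z ≠ (0, 0) := by
  rw [Econe, Set.mem_diff, Set.mem_prod, Set.mem_Ici, Set.mem_Ici, Set.mem_singleton_iff]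

lemma measurableSet_Econe : MeasurableSet Econe :=
  ((measurableSet_Ici.prod measurableSet_Ici).diff (measurableSet_singleton _))

lemma smul_mem_Econe {c : ℝ} (hc : 0 < c) {w : ℝ × ℝ} : c • w ∈ Econe ↔ w ∈ Econe := by
  simp only [mem_Econe_iff, Prod.smul_fst, Prod.smul_snd, smul_eq_mul]
  constructor
  · rintro ⟨⟨h1, h2⟩, h3⟩
    refine ⟨⟨nonneg_of_mul_nonneg_right ?_ hc, nonneg_of_mul_nonneg_right ?_ hc⟩, ?_⟩
    · simpa [mul_comm] using h1
    · simpa [mul_comm] using h2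
    · rintro rfl; simp at h3
  · rintro ⟨⟨h1, h2⟩, h3⟩
    refine ⟨⟨mul_nonneg hc.le h1, mul_nonneg hc.le h2⟩, ?_⟩
    intro h
    apply h3
    have h1' : c * w.1 = 0 := congrArg Prod.fst h
    have h2' : c * w.2 = 0 := congrArg Prod.snd h
    have e1 : w.1 = 0 := by
      rcases mul_eq_zero.1 h1' with h | h
      · exact absurd h hc.ne'
      · exact h
    have e2 : w.2 = 0 := by
      rcases mul_eq_zero.1 h2' with h | h
      · exact absurd h hc.ne'
      · exact h
    exact Prod.ext e1 e2

lemma Econe_pos {z : ℝ × ℝ} (hz : z ∈ Econe) (hd : z.1 = z.2) : 0 < z.1 := by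
  rw [mem_Econe_iff] at hz
  rcases lt_or_eq_of_le hz.1.1 with h | h
  · exact h
  · exact absurd (Prod.ext h.symm (hd ▸ h.symm)) hz.2

lemma ang_eq_pi_div_four {z : ℝ × ℝ} (hz : z ∈ Econe) : ang z = π / 4 ↔ z.1 = z.2 := by
  rw [mem_Econe_iff] at hz
  unfold ang
  split_ifs with h
  · constructor
    · intro he
      exfalso
      have : π / 2 ≠ π / 4 := by
        intro hh
        have := Real.pi_pos
        nlinarith
      exact this he
    · intro he
      exfalso
      exact hz.2 (Prod.ext (he.trans h) h)
  · have hz2 : 0 < z.2 := lt_of_le_of_ne hz.1.2 (Ne.symm h)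
    constructor
    · intro he
      have : Real.arctan (z.1 / z.2) = Real.arctan 1 := by rw [he, Real.arctan_one]
      have hq : z.1 / z.2 = 1 := Real.arctan_injective this
      field_simp at hq
      exact hq
    · intro he
      rw [he, div_self h, Real.arctan_one]

theorem stmt6 (μ : Measure (ℝ × ℝ)) (hμE : μ Econeᶜ = 0)
    (hbf : ∀ ε > (0 : ℝ), μ {z | z ∈ Econe ∧ ε ≤ max z.1 z.2} < ⊤)
    (hhom : ∀ B : Set (ℝ × ℝ), B ⊆ Econe → MeasurableSet B → ∀ c > (0 : ℝ),
      μ (c • B) = ENNReal.ofReal c⁻¹ * μ B)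
    (hstd : ∀ z > (0 : ℝ),
      μ {w | w ∈ Econe ∧ z ≤ w.1} = ENNReal.ofReal (1 / z) ∧
      μ {w | w ∈ Econe ∧ z ≤ w.2} = ENNReal.ofReal (1 / z))
    (htd : μ (Ici 1 ×ˢ Ici 1) = 1) :
    μ {z | z ∈ Econe ∧ z.1 ≠ z.2} = 0 ∧
    ∀ Nn : ℝ × ℝ → ℝ,
      (∀ z w, Nn (z + w) ≤ Nn z + Nn w) →
      (∀ (c : ℝ) (z), Nn (c • z) = |c| * Nn z) →
      (∀ z, Nn z = 0 ↔ z = 0) →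
      Nn (1, 0) = 1 → Nn (0, 1) = 1 →
      ∀ Φ : Measure ℝ,
        (∀ B : Set ℝ, MeasurableSet B →
          Φ B = μ {z | z ∈ Econe ∧ 1 ≤ Nn z ∧ ang z ∈ B}) →
        Φ {π / 4} = ENNReal.ofReal (Nn (1, 1)) ∧ Φ ({π / 4}ᶜ) = 0 := by
  -- basic sets
  set S₁ : Set (ℝ × ℝ) := {w | w ∈ Econe ∧ 1 ≤ w.1 ∧ w.2 < 1} with hS₁def
  set S₂ : Set (ℝ × ℝ) := {w | w ∈ Econe ∧ 1 ≤ w.2 ∧ w.1 < 1} with hS₂def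
  have hsub : (Ici (1:ℝ) ×ˢ Ici (1:ℝ)) ⊆ {w | w ∈ Econe ∧ 1 ≤ w.1} := by
    rintro ⟨a, b⟩ ⟨ha, hb⟩
    simp only [Set.mem_Ici] at ha hb
    refine ⟨mem_Econe_iff.2 ⟨⟨by linarith, by linarith⟩, ?_⟩, ha⟩
    intro h
    have : a = 0 := congrArg Prod.fst h
    linarith
  have hsub2 : (Ici (1:ℝ) ×ˢ Ici (1:ℝ)) ⊆ {w | w ∈ Econe ∧ 1 ≤ w.2} := by
    rintro ⟨a, b⟩ ⟨ha, hb⟩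
    simp only [Set.mem_Ici] at ha hb
    refine ⟨mem_Econe_iff.2 ⟨⟨by linarith, by linarith⟩, ?_⟩, hb⟩
    intro h
    have : a = 0 := congrArg Prod.fst h
    linarith
  have hmeasI : MeasurableSet (Ici (1:ℝ) ×ˢ Ici (1:ℝ)) :=
    measurableSet_Ici.prod measurableSet_Ici
  have h11 := (hstd 1 one_pos).1
  have h12 := (hstd 1 one_pos).2
  -- μ S₁ = 0
  have hS₁0 : μ S₁ = 0 := by
    have hd : S₁ = {w | w ∈ Econe ∧ 1 ≤ w.1} \ (Ici 1 ×ˢ Ici 1) := by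
      ext ⟨a, b⟩
      simp only [hS₁def, Set.mem_setOf_eq, Set.mem_diff, Set.mem_prod, Set.mem_Ici]
      constructor
      · rintro ⟨hE, h1, h2⟩
        exact ⟨⟨hE, h1⟩, fun h => absurd h.2 (not_le.2 h2)⟩
      · rintro ⟨⟨hE, h1⟩, h2⟩
        exact ⟨hE, h1, not_le.1 fun hb => h2 ⟨h1, hb⟩⟩
    rw [hd, measure_diff hsub hmeasI.nullMeasurableSet (by rw [htd]; exact ENNReal.one_ne_top),
      h11, htd]
    norm_num
  have hS₂0 : μ S₂ = 0 := by
    have hd : S₂ = {w | w ∈ Econe ∧ 1 ≤ w.2} \ (Ici 1 ×ˢ Ici 1) := by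
      ext ⟨a, b⟩
      simp only [hS₂def, Set.mem_setOf_eq, Set.mem_diff, Set.mem_prod, Set.mem_Ici]
      constructor
      · rintro ⟨hE, h1, h2⟩
        exact ⟨⟨hE, h1⟩, fun h => absurd h.1 (not_le.2 h2)⟩
      · rintro ⟨⟨hE, h1⟩, h2⟩
        exact ⟨hE, h1, not_le.1 fun hb => h2 ⟨hb, h1⟩⟩
    rw [hd, measure_diff hsub2 hmeasI.nullMeasurableSet (by rw [htd]; exact ENNReal.one_ne_top),
      h12, htd]
    norm_num
  -- measurability of S₁, S₂
  have hS₁m : MeasurableSet S₁ := by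
    have : S₁ = Econe ∩ ((fun w : ℝ × ℝ => w.1) ⁻¹' Ici 1 ∩ (fun w : ℝ × ℝ => w.2) ⁻¹' Iio 1) := by
      ext w
      simp only [hS₁def, Set.mem_setOf_eq, Set.mem_inter_iff, Set.mem_preimage,
        Set.mem_Ici, Set.mem_Iio]
    rw [this]
    exact measurableSet_Econe.inter ((measurable_fst measurableSet_Ici).inter
      (measurable_snd measurableSet_Iio))
  have hS₂m : MeasurableSet S₂ := by
    have : S₂ = Econe ∩ ((fun w : ℝ × ℝ => w.2) ⁻¹' Ici 1 ∩ (fun w : ℝ × ℝ => w.1) ⁻¹' Iio 1) := by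
      ext w
      simp only [hS₂def, Set.mem_setOf_eq, Set.mem_inter_iff, Set.mem_preimage,
        Set.mem_Ici, Set.mem_Iio]
    rw [this]
    exact measurableSet_Econe.inter ((measurable_snd measurableSet_Ici).inter
      (measurable_fst measurableSet_Iio))
  have hS₁E : S₁ ⊆ Econe := fun w hw => hw.1
  have hS₂E : S₂ ⊆ Econe := fun w hw => hw.1
  -- scaled versions
  have hscale₁ : ∀ c : ℝ, 0 < c → μ {w | w ∈ Econe ∧ c ≤ w.1 ∧ w.2 < c} = 0 := by
    intro c hc
    have heq : {w | w ∈ Econe ∧ c ≤ w.1 ∧ w.2 < c} = c • S₁ := by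
      ext w
      rw [Set.mem_smul_set_iff_inv_smul_mem₀ hc.ne']
      simp only [hS₁def, Set.mem_setOf_eq, Prod.smul_fst, Prod.smul_snd, smul_eq_mul]
      rw [show ((c⁻¹ • w : ℝ × ℝ) ∈ Econe) ↔ w ∈ Econe from
        (smul_mem_Econe (inv_pos.2 hc))]
      have e1 : 1 ≤ c⁻¹ * w.1 ↔ c ≤ w.1 := by
        rw [inv_mul_eq_div, one_le_div hc]
      have e2 : c⁻¹ * w.2 < 1 ↔ w.2 < c := by
        rw [inv_mul_eq_div, div_lt_one hc]
      simp only [Prod.smul_fst, Prod.smul_snd, smul_eq_mul, e1, e2]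
    rw [heq, hhom S₁ hS₁E hS₁m c hc, hS₁0, mul_zero]
  have hscale₂ : ∀ c : ℝ, 0 < c → μ {w | w ∈ Econe ∧ c ≤ w.2 ∧ w.1 < c} = 0 := by
    intro c hc
    have heq : {w | w ∈ Econe ∧ c ≤ w.2 ∧ w.1 < c} = c • S₂ := by
      ext w
      rw [Set.mem_smul_set_iff_inv_smul_mem₀ hc.ne']
      simp only [hS₂def, Set.mem_setOf_eq]
      rw [show ((c⁻¹ • w : ℝ × ℝ) ∈ Econe) ↔ w ∈ Econe from
        (smul_mem_Econe (inv_pos.2 hc))]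
      have e1 : 1 ≤ c⁻¹ * w.2 ↔ c ≤ w.2 := by
        rw [inv_mul_eq_div, one_le_div hc]
      have e2 : c⁻¹ * w.1 < 1 ↔ w.1 < c := by
        rw [inv_mul_eq_div, div_lt_one hc]
      simp only [Prod.smul_fst, Prod.smul_snd, smul_eq_mul, e1, e2]
    rw [heq, hhom S₂ hS₂E hS₂m c hc, hS₂0, mul_zero]
  -- the off-diagonal set is null
  have hoff : μ {z | z ∈ Econe ∧ z.1 ≠ z.2} = 0 := by
    set T : ℚ → Set (ℝ × ℝ) := fun q =>
      {w | w ∈ Econe ∧ (q : ℝ) ≤ w.1 ∧ w.2 < q} ∪ {w | w ∈ Econe ∧ (q : ℝ) ≤ w.2 ∧ w.1 < q}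
      with hTdef
    have hTnull : ∀ q : ℚ, μ (T q) = 0 := by
      intro q
      rcases le_or_gt (q : ℝ) 0 with hq | hq
      · have : T q = ∅ := by
          ext w
          simp only [hTdef, Set.mem_union, Set.mem_setOf_eq, Set.mem_empty_iff_false, iff_false]
          rintro (⟨hE, _, h2⟩ | ⟨hE, _, h2⟩)
          · exact absurd (lt_of_lt_of_le h2 hq) (not_lt.2 (mem_Econe_iff.1 hE).1.2)
          · exact absurd (lt_of_lt_of_le h2 hq) (not_lt.2 (mem_Econe_iff.1 hE).1.1)
        · simp [this]
      · exact measure_union_null (hscale₁ q hq) (hscale₂ q hq)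
    have hcover : {z | z ∈ Econe ∧ z.1 ≠ z.2} ⊆ ⋃ q : ℚ, T q := by
      rintro z ⟨hE, hne⟩
      rcases lt_or_gt_of_ne hne with h | h
      · -- z.1 < z.2
        obtain ⟨q, hq1, hq2⟩ := exists_rat_btwn h
        refine Set.mem_iUnion.2 ⟨q, Or.inr ⟨hE, le_of_lt hq2, hq1⟩⟩
      · obtain ⟨q, hq1, hq2⟩ := exists_rat_btwn h
        refine Set.mem_iUnion.2 ⟨q, Or.inl ⟨hE, le_of_lt hq2, hq1⟩⟩
    exact measure_mono_null hcover (measure_iUnion_null hTnull)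
  -- diagonal tail measure
  have hdiag : ∀ c : ℝ, 0 < c →
      μ {z | z ∈ Econe ∧ z.1 = z.2 ∧ c ≤ z.1} = ENNReal.ofReal (1 / c) := by
    intro c hc
    have hA := (hstd c hc).1
    apply le_antisymm
    · rw [← hA]
      exact measure_mono (fun z hz => ⟨hz.1, hz.2.2⟩)
    · calc ENNReal.ofReal (1 / c) = μ {w | w ∈ Econe ∧ c ≤ w.1} := hA.symm
        _ ≤ μ ({z | z ∈ Econe ∧ z.1 = z.2 ∧ c ≤ z.1} ∪ {z | z ∈ Econe ∧ z.1 ≠ z.2}) := by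
            apply measure_mono
            rintro z ⟨hE, h1⟩
            by_cases hd : z.1 = z.2
            · exact Or.inl ⟨hE, hd, h1⟩
            · exact Or.inr ⟨hE, hd⟩
        _ ≤ μ {z | z ∈ Econe ∧ z.1 = z.2 ∧ c ≤ z.1} + μ {z | z ∈ Econe ∧ z.1 ≠ z.2} :=
            measure_union_le _ _
        _ = μ {z | z ∈ Econe ∧ z.1 = z.2 ∧ c ≤ z.1} := by rw [hoff, add_zero]
  refine ⟨hoff, ?_⟩
  intro Nn htri hsmul hzero h10 h01 Φ hΦ
  -- positivity
  have hNnonneg : ∀ z, 0 ≤ Nn z := by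
    intro z
    have h0 : Nn 0 = 0 := (hzero 0).2 rfl
    have hneg : Nn (-z) = Nn z := by
      have := hsmul (-1) z
      simpa using this
    have := htri z (-z)
    simp [h0, hneg] at this
    linarith
  have hN : 0 < Nn (1, 1) := by
    rcases lt_or_eq_of_le (hNnonneg (1, 1)) with h | h
    · exact h
    · exfalso
      have := (hzero (1, 1)).1 h.symm
      simp [Prod.ext_iff] at this
  set N := Nn (1, 1) with hNdef
  -- diagonal norm value
  have hdiagN : ∀ z : ℝ × ℝ, z ∈ Econe → z.1 = z.2 → Nn z = z.1 * N := by
    intro z hE hd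
    have hpos : 0 < z.1 := Econe_pos hE hd
    have hz : z = z.1 • ((1 : ℝ), (1 : ℝ)) := by
      ext
      · simp
      · simp [hd]
    calc Nn z = Nn (z.1 • ((1 : ℝ), (1 : ℝ))) := by rw [← hz]
      _ = |z.1| * N := hsmul z.1 (1, 1)
      _ = z.1 * N := by rw [abs_of_pos hpos]
  have hseteq : {z | z ∈ Econe ∧ 1 ≤ Nn z ∧ ang z ∈ ({π / 4} : Set ℝ)} =
      {z | z ∈ Econe ∧ z.1 = z.2 ∧ 1 / N ≤ z.1} := by
    ext z
    simp only [Set.mem_setOf_eq, Set.mem_singleton_iff]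
    constructor
    · rintro ⟨hE, hNz, hang⟩
      have hd : z.1 = z.2 := (ang_eq_pi_div_four hE).1 hang
      refine ⟨hE, hd, ?_⟩
      rw [hdiagN z hE hd] at hNz
      exact (div_le_iff₀ hN).2 hNz
    · rintro ⟨hE, hd, hc⟩
      refine ⟨hE, ?_, (ang_eq_pi_div_four hE).2 hd⟩
      rw [hdiagN z hE hd]
      exact (div_le_iff₀ hN).1 hc
  constructor
  · rw [hΦ {π / 4} (measurableSet_singleton _), hseteq,
      hdiag (1 / N) (by positivity), one_div_one_div]
  · rw [hΦ ({π / 4}ᶜ) (measurableSet_singleton _).compl]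
    apply measure_mono_null _ hoff
    rintro z ⟨hE, _, hang⟩
    refine ⟨hE, fun hd => ?_⟩
    exact (Set.mem_compl_iff _ _).1 hang ((ang_eq_pi_div_four hE).2 hd)
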